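/- Let M be a real symmetric positive semidefinite m×m matrix and b ∈ ℝᵐ, and let g(α) = α² bᵀ(M + αI)⁻²b for α > 0. Then g(α) → ‖b‖² as α → +∞, and g(α) → ‖Pb‖² as α → 0⁺, where P denotes the orthogonal projection of ℝᵐ onto the kernel of M and ‖·‖ is the Euclidean norm. -/

import Mathlib

open Matrix Set Filter Topology

/-- Quadratic form of `U * diagonal d * Uᵀ` as a weighted sum of squares. -/
theorem quadform_aux (m : ℕ) (U : Matrix (Fin m) (Fin m) ℝ) (d x : Fin m → ℝ) :
    x ⬝ᵥ ((U * diagonal d * Uᵀ) *ᵥ x) = ∑ i, d i * ((Uᵀ *ᵥ x) i)^2 := by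
  rw [← mulVec_mulVec, ← mulVec_mulVec, dotProduct_mulVec, ← mulVec_transpose]
  simp only [dotProduct, mulVec_diagonal]
  exact Finset.sum_congr rfl fun i _ => by ring

/-- Limits of the discrepancy function `g(α) = α² bᵀ(M + αI)⁻²b`:
`g(α) → ‖b‖²` as `α → +∞` and `g(α) → ‖Pb‖²` as `α → 0⁺`, where `p = Pb` is the
orthogonal projection of `b` onto the kernel of `M` (characterized by `Mp = 0`
and `b − p` orthogonal to the kernel of `M`). -/
theorem discrepancy_limits
    (m : ℕ) (M : Matrix (Fin m) (Fin m) ℝ) (b p : Fin m → ℝ)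
    (hM : M.PosSemidef)
    (hp_ker : M *ᵥ p = 0)
    (hp_orth : ∀ q : Fin m → ℝ, M *ᵥ q = 0 → (b - p) ⬝ᵥ q = 0) :
    Tendsto
      (fun α : ℝ => α ^ 2 *
        (b ⬝ᵥ (((M + α • (1 : Matrix (Fin m) (Fin m) ℝ))⁻¹
          * (M + α • (1 : Matrix (Fin m) (Fin m) ℝ))⁻¹) *ᵥ b)))
      atTop (𝓝 (∑ i, b i ^ 2)) ∧
    Tendsto
      (fun α : ℝ => α ^ 2 *
        (b ⬝ᵥ (((M + α • (1 : Matrix (Fin m) (Fin m) ℝ))⁻¹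
          * (M + α • (1 : Matrix (Fin m) (Fin m) ℝ))⁻¹) *ᵥ b)))
      (𝓝[>] (0:ℝ)) (𝓝 (∑ i, p i ^ 2)) := by
  classical
  have hH : M.IsHermitian := hM.isHermitian
  set U : Matrix (Fin m) (Fin m) ℝ := (hH.eigenvectorUnitary : Matrix (Fin m) (Fin m) ℝ) with hU
  set lam : Fin m → ℝ := hH.eigenvalues with hlam
  have hU2 : U * Uᵀ = 1 := by
    have := mem_unitaryGroup_iff.mp hH.eigenvectorUnitary.2
    rwa [star_eq_conjTranspose, conjTranspose_eq_transpose_of_trivial] at this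
  have hU1 : Uᵀ * U = 1 := by
    have := mem_unitaryGroup_iff'.mp hH.eigenvectorUnitary.2
    rwa [star_eq_conjTranspose, conjTranspose_eq_transpose_of_trivial] at this
  have hspec : M = U * diagonal lam * Uᵀ := by
    have h := hH.spectral_theorem
    rwa [Unitary.conjStarAlgAut_apply, star_eq_conjTranspose, conjTranspose_eq_transpose_of_trivial,
      show (RCLike.ofReal ∘ hH.eigenvalues : Fin m → ℝ) = lam from
        funext fun i => by simp [hlam]] at h
  have hlam_nonneg : ∀ i, 0 ≤ lam i := hM.eigenvalues_nonneg
  set c : Fin m → ℝ := Uᵀ *ᵥ b with hc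
  -- sandwich of a diagonal matrix
  have sandwich : ∀ d₁ d₂ : Fin m → ℝ,
      (U * diagonal d₁ * Uᵀ) * (U * diagonal d₂ * Uᵀ) = U * diagonal (fun i => d₁ i * d₂ i) * Uᵀ := by
    intro d₁ d₂
    calc (U * diagonal d₁ * Uᵀ) * (U * diagonal d₂ * Uᵀ)
        = U * (diagonal d₁ * (Uᵀ * U) * diagonal d₂) * Uᵀ := by
          simp only [Matrix.mul_assoc]
      _ = U * diagonal (fun i => d₁ i * d₂ i) * Uᵀ := by
          rw [hU1, Matrix.mul_one, diagonal_mul_diagonal]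
  -- decomposition of M + αI
  have hdecomp : ∀ α : ℝ, M + α • (1 : Matrix (Fin m) (Fin m) ℝ)
      = U * diagonal (fun i => lam i + α) * Uᵀ := by
    intro α
    have h1 : (α • (1 : Matrix (Fin m) (Fin m) ℝ)) = Matrix.diagonal (fun _ => α) := by
      ext i j
      by_cases h : i = j <;> simp [h, Matrix.one_apply, Matrix.diagonal_apply]
    have h2 : (diagonal (fun i => lam i + α) : Matrix (Fin m) (Fin m) ℝ)
        = diagonal lam + α • 1 := by
      rw [h1, ← diagonal_add]
    rw [h2, Matrix.mul_add, Matrix.add_mul, ← hspec]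
    congr 1
    rw [Matrix.mul_smul, Matrix.mul_one, Matrix.smul_mul, hU2]
  -- inverse formula
  have hinv : ∀ α : ℝ, 0 < α → (M + α • (1 : Matrix (Fin m) (Fin m) ℝ))⁻¹
      = U * diagonal (fun i => (lam i + α)⁻¹) * Uᵀ := by
    intro α hα
    apply Matrix.inv_eq_left_inv
    rw [hdecomp, sandwich]
    have : (fun i => (lam i + α)⁻¹ * (lam i + α)) = fun _ => (1:ℝ) := by
      funext i
      have hli := hlam_nonneg i
      exact inv_mul_cancel₀ (by positivity : (lam i + α) ≠ 0)
    rw [this, diagonal_one, Matrix.mul_one, hU2]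
  -- key formula for g
  have key : ∀ α : ℝ, 0 < α →
      α ^ 2 * (b ⬝ᵥ (((M + α • (1 : Matrix (Fin m) (Fin m) ℝ))⁻¹
          * (M + α • (1 : Matrix (Fin m) (Fin m) ℝ))⁻¹) *ᵥ b))
      = ∑ i, (c i)^2 * (α / (lam i + α))^2 := by
    intro α hα
    rw [hinv α hα, sandwich, quadform_aux, ← hc, Finset.mul_sum]
    refine Finset.sum_congr rfl fun i _ => ?_
    have hli := hlam_nonneg i
    have hne : lam i + α ≠ 0 := by positivity
    field_simp
  -- kernel characterization
  have hker : ∀ q : Fin m → ℝ, M *ᵥ q = 0 → ∀ i, lam i ≠ 0 → (Uᵀ *ᵥ q) i = 0 := by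
    intro q hq i hi
    have h0 : q ⬝ᵥ (M *ᵥ q) = 0 := by rw [hq, dotProduct_zero]
    rw [hspec, quadform_aux] at h0
    have hterm : ∀ j ∈ Finset.univ, (0:ℝ) ≤ lam j * ((Uᵀ *ᵥ q) j)^2 :=
      fun j _ => mul_nonneg (hlam_nonneg j) (sq_nonneg _)
    have := (Finset.sum_eq_zero_iff_of_nonneg hterm).mp h0 i (Finset.mem_univ i)
    have hpos : 0 < lam i := lt_of_le_of_ne (hlam_nonneg i) (Ne.symm hi)
    have := mul_eq_zero.mp this
    rcases this with h | h
    · exact absurd h hi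
    · exact pow_eq_zero_iff (two_ne_zero) |>.mp h
  -- the projection vector
  set v : Fin m → ℝ := fun i => if lam i = 0 then c i else 0 with hv
  set p' : Fin m → ℝ := U *ᵥ v with hp'
  have hMU : M * U = U * diagonal lam := by
    rw [hspec, Matrix.mul_assoc, hU1, Matrix.mul_one]
  have hp'_ker : M *ᵥ p' = 0 := by
    rw [hp', mulVec_mulVec, hMU, ← mulVec_mulVec]
    have hdv : diagonal lam *ᵥ v = 0 := by
      funext i
      simp only [mulVec_diagonal, hv, Pi.zero_apply]
      by_cases h : lam i = 0 <;> simp [h]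
    rw [hdv, mulVec_zero]
  have hp'_orth : ∀ q : Fin m → ℝ, M *ᵥ q = 0 → (b - p') ⬝ᵥ q = 0 := by
    intro q hq
    set d : Fin m → ℝ := Uᵀ *ᵥ q with hd
    have hb_q : b ⬝ᵥ q = c ⬝ᵥ d := by
      have : q = (U * Uᵀ) *ᵥ q := by rw [hU2, one_mulVec]
      nth_rewrite 1 [this]
      rw [← mulVec_mulVec, dotProduct_mulVec, ← mulVec_transpose, ← hc, ← hd]
    have hp'_q : p' ⬝ᵥ q = v ⬝ᵥ d := by
      rw [hp', dotProduct_comm, dotProduct_mulVec, ← mulVec_transpose, ← hd, dotProduct_comm]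
    rw [sub_dotProduct, hb_q, hp'_q, ← sub_dotProduct]
    apply Finset.sum_eq_zero
    intro i _
    by_cases h : lam i = 0
    · simp [Pi.sub_apply, hv, h]
    · have : d i = 0 := hker q hq i h
      rw [this, mul_zero]
  -- uniqueness: p = p'
  have hpeq : p = p' := by
    have hdker : M *ᵥ (p - p') = 0 := by rw [mulVec_sub, hp_ker, hp'_ker, sub_zero]
    have h1 : (b - p) ⬝ᵥ (p - p') = 0 := hp_orth _ hdker
    have h2 : (b - p') ⬝ᵥ (p - p') = 0 := hp'_orth _ hdker
    have : (p - p') ⬝ᵥ (p - p') = 0 := by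
      have := sub_eq_zero.mpr (h2.trans h1.symm)
      rwa [← sub_dotProduct, show b - p' - (b - p) = p - p' from by ring] at this
    have := dotProduct_self_eq_zero.mp this
    exact sub_eq_zero.mp this
  -- sums of squares
  have hsum_b : ∑ i, b i ^ 2 = ∑ i, (c i)^2 := by
    have h1 : b ⬝ᵥ ((U * Matrix.diagonal (fun _ => (1:ℝ)) * Uᵀ) *ᵥ b) = ∑ i, (1:ℝ) * (c i)^2 :=
      quadform_aux m U _ b
    rw [diagonal_one, Matrix.mul_one, hU2, one_mulVec] at h1
    simpa [dotProduct, pow_two] using h1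
  have hsum_p : ∑ i, p i ^ 2 = ∑ i, (v i)^2 := by
    rw [hpeq]
    have h1 : p' ⬝ᵥ ((U * Matrix.diagonal (fun _ => (1:ℝ)) * Uᵀ) *ᵥ p') = ∑ i, (1:ℝ) * ((Uᵀ *ᵥ p') i)^2 :=
      quadform_aux m U _ p'
    rw [diagonal_one, Matrix.mul_one, hU2, one_mulVec] at h1
    have h2 : Uᵀ *ᵥ p' = v := by
      rw [hp', mulVec_mulVec, hU1, one_mulVec]
    rw [h2] at h1
    simp only [one_mul] at h1
    rw [← h1]
    simp [dotProduct, pow_two]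
  constructor
  · -- atTop limit
    have heq : (fun α : ℝ => α ^ 2 *
        (b ⬝ᵥ (((M + α • (1 : Matrix (Fin m) (Fin m) ℝ))⁻¹
          * (M + α • (1 : Matrix (Fin m) (Fin m) ℝ))⁻¹) *ᵥ b)))
        =ᶠ[atTop] fun α => ∑ i, (c i)^2 * (α / (lam i + α))^2 := by
      filter_upwards [eventually_gt_atTop 0] with α hα using key α hα
    rw [hsum_b]
    refine Tendsto.congr' heq.symm ?_
    have : (∑ i, (c i)^2) = ∑ i, (c i)^2 * (1:ℝ)^2 := by simp
    rw [this]
    refine tendsto_finset_sum _ fun i _ => ?_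
    refine Tendsto.const_mul _ (Tendsto.pow ?_ 2)
    have h1 : Tendsto (fun α : ℝ => lam i / (lam i + α)) atTop (𝓝 0) :=
      Tendsto.div_atTop tendsto_const_nhds (tendsto_atTop_add_const_left _ _ tendsto_id)
    have h2 : Tendsto (fun α : ℝ => 1 - lam i / (lam i + α)) atTop (𝓝 (1 - 0)) :=
      tendsto_const_nhds.sub h1
    rw [sub_zero] at h2
    refine Tendsto.congr' ?_ h2
    filter_upwards [eventually_gt_atTop 0] with α hα
    have hne : lam i + α ≠ 0 := by have := hlam_nonneg i; positivity
    field_simp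
    ring
  · -- 0⁺ limit
    have heq : (fun α : ℝ => α ^ 2 *
        (b ⬝ᵥ (((M + α • (1 : Matrix (Fin m) (Fin m) ℝ))⁻¹
          * (M + α • (1 : Matrix (Fin m) (Fin m) ℝ))⁻¹) *ᵥ b)))
        =ᶠ[𝓝[>] (0:ℝ)] fun α => ∑ i, (c i)^2 * (α / (lam i + α))^2 := by
      filter_upwards [self_mem_nhdsWithin] with α hα using key α hα
    rw [hsum_p]
    refine Tendsto.congr' heq.symm ?_
    refine tendsto_finset_sum _ fun i _ => ?_
    by_cases h : lam i = 0
    · have : (fun α : ℝ => (c i)^2 * (α / (lam i + α))^2) =ᶠ[𝓝[>] (0:ℝ)]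
          fun _ => (v i)^2 := by
        filter_upwards [self_mem_nhdsWithin] with α (hα : 0 < α)
        rw [h, zero_add, div_self hα.ne']
        simp [hv, h]
      exact Tendsto.congr' this.symm tendsto_const_nhds
    · have hvi : v i = 0 := by simp [hv, h]
      have hpos : 0 < lam i := lt_of_le_of_ne (hlam_nonneg i) (Ne.symm h)
      have h1 : Tendsto (fun α : ℝ => (c i)^2 * (α / (lam i + α))^2) (𝓝 (0:ℝ))
          (𝓝 ((c i)^2 * ((0:ℝ) / (lam i + 0))^2)) := by
        refine Tendsto.const_mul _ (Tendsto.pow ?_ 2)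
        exact Tendsto.div tendsto_id (tendsto_const_nhds.add tendsto_id)
          (by simpa using hpos.ne')
      rw [hvi]
      simpa using h1.mono_left nhdsWithin_le_nhds
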